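/- Taking a Cartesian product with a cube preserves manifold structure, global reach and local reach (Lemma 4.2): Fix integers d, k ≥ 1 with d + k ≤ m, a real K_I ≥ 1, and reals 0 < τ_g ≤ τ_ℓ. Let M ⊆ [−K_I, K_I]^{m−k} ⊆ ℝ^{m−k} be a compact topological d-manifold with boundary having reach at least τ_g and local reach at least τ_ℓ. Then M × [−K_I, K_I]^k ⊆ [−K_I, K_I]^m ⊆ ℝ^m is a compact topological (d+k)-manifold with boundary having reach at least τ_g and local reach at least τ_ℓ. -/

import Mathlib

open MeasureTheory Metric Set

noncomputable section

/-- `M ⊆ E` has reach at least `τ`: every point at distance `< τ` from `M`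
has a unique nearest point in `M`. -/
def HasReachGE {E : Type*} [MetricSpace E] (M : Set E) (τ : ℝ) : Prop :=
  ∀ x : E, Metric.infDist x M < τ →
    ∃! y, y ∈ M ∧ dist x y = Metric.infDist x M

/-- `M` has local reach at least `τ`: every `p ∈ M` has a neighborhood of `p`
in `M` with reach at least `τ`. -/
def HasLocalReachGE {E : Type*} [MetricSpace E] (M : Set E) (τ : ℝ) : Prop :=
  ∀ p ∈ M, ∃ U : Set E, U ⊆ M ∧ U ∈ nhdsWithin p M ∧ HasReachGE U τ

/-- `M` is a compact topological `d`-manifold with boundary: `M` is compact and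
every point of `M` has an open neighborhood in `M` homeomorphic to an open subset
of the half-space `[0,∞) × ℝ^{d-1}`. -/
def IsCompactTopManifoldWithBoundary {E : Type*} [TopologicalSpace E] (d : ℕ)
    (M : Set E) : Prop :=
  IsCompact M ∧
  ∀ p : M, ∃ U : Set M, IsOpen U ∧ p ∈ U ∧
    ∃ V : Set {x : ℝ × EuclideanSpace ℝ (Fin (d - 1)) // 0 ≤ x.1},
      IsOpen V ∧ Nonempty (U ≃ₜ V)

/-- The cube `[-K, K]^j` in `ℝ^j`. -/
def cube (j : ℕ) (K : ℝ) : Set (EuclideanSpace ℝ (Fin j)) := {x | ∀ i, |x i| ≤ K}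

/-- The Cartesian product `M × [-K, K]^b ⊆ ℝ^a × ℝ^b`, where `ℝ^a × ℝ^b` carries
the `L²` (Euclidean) norm, so that `‖(x, y)‖² = ‖x‖² + ‖y‖²`. -/
def prodWithCube {a b : ℕ} (M : Set (EuclideanSpace ℝ (Fin a))) (K : ℝ) :
    Set (WithLp 2 (EuclideanSpace ℝ (Fin a) × EuclideanSpace ℝ (Fin b))) :=
  {z | (WithLp.equiv 2 _ z).1 ∈ M ∧ ∀ i, |(WithLp.equiv 2 _ z).2 i| ≤ K}


variable {F : Type*} [NormedAddCommGroup F] [InnerProductSpace ℝ F]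

lemma convex_nearest_unique {C : Set F} (hC : Convex ℝ C) {y p q : F}
    (hp : p ∈ C) (hq : q ∈ C) (hdp : dist y p = infDist y C)
    (hdq : dist y q = infDist y C) : p = q := by
  by_contra hne
  set m := (2⁻¹ : ℝ) • p + (2⁻¹ : ℝ) • q with hm
  have hmC : m ∈ C := hC hp hq (by norm_num) (by norm_num) (by norm_num)
  have hle : infDist y C ≤ dist y m := infDist_le_dist_of_mem hmC
  have hpar := parallelogram_law_with_norm ℝ (y - p) (y - q)
  have h1 : (y - p) + (y - q) = (2:ℝ) • (y - m) := by rw [hm]; module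
  have h2 : (y - p) - (y - q) = q - p := by abel
  rw [h1, h2] at hpar
  have hnm : ‖(2:ℝ) • (y - m)‖ = 2 * ‖y - m‖ := by
    rw [norm_smul]; simp
  rw [hnm] at hpar
  have hqp : 0 < ‖q - p‖ := by
    rw [norm_pos_iff, sub_ne_zero]; exact fun h => hne h.symm
  have hdm : dist y m < infDist y C := by
    have e1 : dist y p = ‖y - p‖ := dist_eq_norm _ _
    have e2 : dist y q = ‖y - q‖ := dist_eq_norm _ _
    have e3 : dist y m = ‖y - m‖ := dist_eq_norm _ _
    have hr : 0 ≤ infDist y C := infDist_nonneg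
    rw [e3]
    nlinarith [norm_nonneg (y - m), hpar, hdp, hdq, e1, e2]
  exact absurd hle (not_le.mpr hdm)

lemma le_infDist' {E : Type*} [MetricSpace E] {s : Set E} (hs : s.Nonempty) {x : E} {c : ℝ}
    (h : ∀ y ∈ s, c ≤ dist x y) : c ≤ infDist x s := by
  by_contra hlt
  obtain ⟨y, hy, hdy⟩ := (infDist_lt_iff hs).mp (not_le.mp hlt)
  exact absurd (h y hy) (not_le.mpr hdy)


lemma cube_nonempty {b : ℕ} {K : ℝ} (hK : 0 ≤ K) : (cube b K).Nonempty :=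
  ⟨0, fun i => by simpa using hK⟩

lemma cube_convex {b : ℕ} {K : ℝ} : Convex ℝ (cube b K) := by
  intro x hx y hy s t hs ht hst i
  have h1 := hx i
  have h2 := hy i
  simp only [PiLp.add_apply, PiLp.smul_apply, smul_eq_mul]
  calc |s * x i + t * y i| ≤ |s * x i| + |t * y i| := abs_add_le _ _
    _ = s * |x i| + t * |y i| := by rw [abs_mul, abs_mul, abs_of_nonneg hs, abs_of_nonneg ht]
    _ ≤ s * K + t * K := by gcongr
    _ = K := by rw [← add_mul, hst, one_mul]

lemma cube_isCompact {b : ℕ} {K : ℝ} : IsCompact (cube b K) := by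
  apply Metric.isCompact_of_isClosed_isBounded
  · have : cube b K = ⋂ i, {x : EuclideanSpace ℝ (Fin b) | |x i| ≤ K} := by
      ext x; simp [cube]
    rw [this]
    exact isClosed_iInter fun i =>
      isClosed_le (continuous_abs.comp (EuclideanSpace.proj (𝕜 := ℝ) i).continuous)
        continuous_const
  · rw [Metric.isBounded_iff_subset_closedBall 0]
    refine ⟨Real.sqrt (b * K ^ 2), fun x hx => ?_⟩
    simp only [mem_closedBall, dist_zero_right]
    rw [EuclideanSpace.norm_eq]
    apply Real.sqrt_le_sqrt
    calc (∑ i, ‖x i‖ ^ 2) ≤ ∑ _i : Fin b, K ^ 2 := by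
          apply Finset.sum_le_sum
          intro i _
          have := hx i
          have h0 : (0:ℝ) ≤ |x i| := abs_nonneg _
          calc ‖x i‖ ^ 2 = |x i| ^ 2 := by rw [Real.norm_eq_abs]
            _ ≤ K ^ 2 := by nlinarith
      _ = b * K ^ 2 := by simp [Finset.sum_const, Finset.card_univ]

lemma prod_reach {a b : ℕ} {S : Set (EuclideanSpace ℝ (Fin a))} {K τ : ℝ} (hK : 0 ≤ K)
    (hSne : S.Nonempty) (hS : HasReachGE S τ) :
    HasReachGE (prodWithCube (b := b) S K) τ := by
  set C : Set (EuclideanSpace ℝ (Fin b)) := cube b K with hC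
  have hCne : C.Nonempty := cube_nonempty hK
  have hCcomp : IsCompact C := cube_isCompact
  have hCconv : Convex ℝ C := cube_convex
  set P := prodWithCube (b := b) S K with hP
  have memP : ∀ w : WithLp 2 (EuclideanSpace ℝ (Fin a) × EuclideanSpace ℝ (Fin b)),
      w ∈ P ↔ w.fst ∈ S ∧ w.snd ∈ C := fun w => Iff.rfl
  have hPne : P.Nonempty :=
    ⟨(WithLp.equiv 2 _).symm (hSne.choose, hCne.choose),
      (memP _).mpr ⟨hSne.choose_spec, hCne.choose_spec⟩⟩
  intro z hz
  -- lower bound on infDist of product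
  have key : Real.sqrt (infDist z.fst S ^ 2 + infDist z.snd C ^ 2) ≤ infDist z P := by
    apply le_infDist' hPne
    intro w hw
    rw [WithLp.prod_dist_eq_of_L2]
    apply Real.sqrt_le_sqrt
    have h1 : infDist z.fst S ≤ dist z.fst w.fst := infDist_le_dist_of_mem ((memP w).mp hw).1
    have h2 : infDist z.snd C ≤ dist z.snd w.snd := infDist_le_dist_of_mem ((memP w).mp hw).2
    have h1' : 0 ≤ infDist z.fst S := infDist_nonneg
    have h2' : 0 ≤ infDist z.snd C := infDist_nonneg
    nlinarith
  have hx1 : infDist z.fst S < τ := by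
    have h5 : infDist z.fst S ^ 2 ≤ infDist z.fst S ^ 2 + infDist z.snd C ^ 2 := by
      nlinarith [sq_nonneg (infDist z.snd C)]
    have := Real.sqrt_le_sqrt h5
    rw [Real.sqrt_sq infDist_nonneg] at this
    linarith [lt_of_le_of_lt key hz]
  obtain ⟨xs, ⟨hxsS, hxsd⟩, hxsu⟩ := hS z.fst hx1
  obtain ⟨ys, hysC, hysd⟩ := hCcomp.exists_infDist_eq_dist hCne z.snd
  set ws : WithLp 2 (EuclideanSpace ℝ (Fin a) × EuclideanSpace ℝ (Fin b)) :=
    (WithLp.equiv 2 _).symm (xs, ys) with hws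
  have hwsP : ws ∈ P := (memP ws).mpr ⟨hxsS, hysC⟩
  have hwsd : dist z ws = Real.sqrt (infDist z.fst S ^ 2 + infDist z.snd C ^ 2) := by
    rw [WithLp.prod_dist_eq_of_L2]
    have e1 : ws.fst = xs := rfl
    have e2 : ws.snd = ys := rfl
    rw [e1, e2, hxsd, ← hysd]
  have heq : infDist z P = dist z ws :=
    le_antisymm (infDist_le_dist_of_mem hwsP) (hwsd ▸ key)
  refine ⟨ws, ⟨hwsP, heq.symm⟩, ?_⟩
  rintro w ⟨hwP, hwd⟩
  have h1 : infDist z.fst S ≤ dist z.fst w.fst := infDist_le_dist_of_mem ((memP w).mp hwP).1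
  have h2 : infDist z.snd C ≤ dist z.snd w.snd := infDist_le_dist_of_mem ((memP w).mp hwP).2
  have hsq : dist z.fst w.fst ^ 2 + dist z.snd w.snd ^ 2 = infDist z.fst S ^ 2 + infDist z.snd C ^ 2 := by
    have e1 : dist z w = Real.sqrt (dist z.fst w.fst ^ 2 + dist z.snd w.snd ^ 2) :=
      WithLp.prod_dist_eq_of_L2 z w
    have e2 : dist z w = Real.sqrt (infDist z.fst S ^ 2 + infDist z.snd C ^ 2) := by
      rw [hwd, heq, hwsd]
    have h3 : 0 ≤ dist z.fst w.fst ^ 2 + dist z.snd w.snd ^ 2 := by positivity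
    have h4 : 0 ≤ infDist z.fst S ^ 2 + infDist z.snd C ^ 2 := by positivity
    have h5 := e1.symm.trans e2
    rw [← Real.sq_sqrt h3, h5, Real.sq_sqrt h4]
  have g1 : infDist z.fst S ^ 2 ≤ dist z.fst w.fst ^ 2 := pow_le_pow_left₀ infDist_nonneg h1 2
  have g2 : infDist z.snd C ^ 2 ≤ dist z.snd w.snd ^ 2 := pow_le_pow_left₀ infDist_nonneg h2 2
  have q1 : dist z.fst w.fst ^ 2 = infDist z.fst S ^ 2 := by linarith
  have q2 : dist z.snd w.snd ^ 2 = infDist z.snd C ^ 2 := by linarith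
  have hd1 : dist z.fst w.fst = infDist z.fst S := by
    rw [← Real.sqrt_sq dist_nonneg, q1, Real.sqrt_sq infDist_nonneg]
  have hd2 : dist z.snd w.snd = infDist z.snd C := by
    rw [← Real.sqrt_sq dist_nonneg, q2, Real.sqrt_sq infDist_nonneg]
  have hw1 : w.fst = xs := hxsu w.fst ⟨((memP w).mp hwP).1, hd1⟩
  have hw2 : w.snd = ys := convex_nearest_unique hCconv ((memP w).mp hwP).2 hysC hd2 hysd.symm
  show w = ws
  have : w = WithLp.toLp 2 (w.fst, w.snd) := rfl
  rw [hws]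
  exact this.trans (by rw [hw1, hw2]; rfl)

/-- `Ioo (-K) K` is homeomorphic to `ℝ`. -/
def iooHomeoReal {K : ℝ} (hK : 0 < K) : ↥(Ioo (-K) K) ≃ₜ ℝ := by
  refine Homeomorph.symm ⟨⟨fun x => ⟨K * x / (1 + |x|), ?_⟩, fun y => y.1 / (K - |y.1|), ?_, ?_⟩, ?_, ?_⟩
  · have hD : (0:ℝ) < 1 + |x| := by positivity
    constructor
    · rw [neg_lt, ← neg_div, ← neg_mul]
      rw [div_lt_iff₀ hD]
      nlinarith [abs_nonneg x, neg_abs_le x, le_abs_self x]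
    · rw [div_lt_iff₀ hD]
      nlinarith [abs_nonneg x, neg_abs_le x, le_abs_self x]
  · intro x
    simp only
    have hD : (0:ℝ) < 1 + |x| := by positivity
    have habs : |K * x / (1 + |x|)| = K * |x| / (1 + |x|) := by
      rw [abs_div, abs_mul, abs_of_pos hK, abs_of_pos hD]
    rw [habs]
    have h2 : K - K * |x| / (1 + |x|) = K / (1 + |x|) := by field_simp; ring
    rw [h2]
    rw [div_div_div_cancel_right₀]
    · exact mul_div_cancel_left₀ x (ne_of_gt hK)
    · exact ne_of_gt hD
  · rintro ⟨y, hy1, hy2⟩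
    apply Subtype.ext
    simp only
    have hKy : (0:ℝ) < K - |y| := by
      rw [sub_pos, abs_lt]; exact ⟨hy1, hy2⟩
    have habs : |y / (K - |y|)| = |y| / (K - |y|) := by
      rw [abs_div, abs_of_pos hKy]
    rw [habs]
    have h2 : 1 + |y| / (K - |y|) = K / (K - |y|) := by field_simp; ring
    rw [h2]
    rw [mul_div_assoc, div_div_div_cancel_right₀]
    · field_simp
    · exact ne_of_gt hKy
  · apply Continuous.subtype_mk
    apply Continuous.div
    · exact continuous_const.mul continuous_id
    · exact continuous_const.add continuous_abs
    · intro x; positivity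
  · apply Continuous.div
    · exact continuous_subtype_val
    · exact continuous_const.sub (continuous_abs.comp continuous_subtype_val)
    · rintro ⟨y, hy1, hy2⟩
      simp only [Function.comp]
      have : |y| < K := abs_lt.mpr ⟨hy1, hy2⟩
      intro h; rw [sub_eq_zero] at h; exact absurd h.symm (ne_of_lt this)

/-- `Ico (-K) K` is homeomorphic to `[0, ∞)`. -/
def icoHomeoIci {K : ℝ} (hK : 0 < K) : ↥(Ico (-K) K) ≃ₜ ↥(Ici (0:ℝ)) := by
  refine ⟨⟨fun x => ⟨(x.1 + K) / (K - x.1), ?_⟩, fun u => ⟨K * (u.1 - 1) / (u.1 + 1), ?_⟩, ?_, ?_⟩, ?_, ?_⟩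
  · obtain ⟨x, hx1, hx2⟩ := x
    have h1 : (0:ℝ) < K - x := by linarith
    have h2 : (0:ℝ) ≤ x + K := by linarith
    exact div_nonneg h2 h1.le
  · obtain ⟨u, hu⟩ := u
    have hu : (0:ℝ) ≤ u := hu
    have h1 : (0:ℝ) < u + 1 := by linarith
    constructor
    · rw [le_div_iff₀ h1]; nlinarith
    · rw [div_lt_iff₀ h1]; nlinarith
  · rintro ⟨x, hx1, hx2⟩
    apply Subtype.ext
    simp only
    have h1 : K - x ≠ 0 := by intro h; rw [sub_eq_zero] at h; linarith
    have hK' : K ≠ 0 := ne_of_gt hK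
    field_simp
    rw [div_eq_iff (by intro h; apply hK'; linarith)]
    ring
  · rintro ⟨u, hu⟩
    have hu : (0:ℝ) ≤ u := hu
    apply Subtype.ext
    simp only
    have h1 : u + 1 ≠ 0 := by positivity
    have h2 : K - K * (u - 1) / (u + 1) ≠ 0 := by
      have : K - K * (u - 1) / (u + 1) = 2 * K / (u + 1) := by field_simp; ring
      rw [this]; positivity
    have hK' : K ≠ 0 := ne_of_gt hK
    field_simp
    ring
  · apply Continuous.subtype_mk
    apply Continuous.div
    · exact (continuous_subtype_val).add continuous_const
    · exact continuous_const.sub continuous_subtype_val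
    · rintro ⟨x, hx1, hx2⟩
      intro h; rw [sub_eq_zero] at h
      exact absurd h.symm (ne_of_lt hx2)
  · apply Continuous.subtype_mk
    apply Continuous.div
    · exact continuous_const.mul ((continuous_subtype_val).sub continuous_const)
    · exact (continuous_subtype_val).add continuous_const
    · rintro ⟨u, hu⟩
      have hu : (0:ℝ) ≤ u := hu
      intro h; simp only at h; linarith

/-- `Ioc (-K) K` is homeomorphic to `[0, ∞)`. -/
def iocHomeoIci {K : ℝ} (hK : 0 < K) : ↥(Ioc (-K) K) ≃ₜ ↥(Ici (0:ℝ)) := by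
  refine Homeomorph.trans ?_ (icoHomeoIci hK)
  refine ⟨⟨fun x => ⟨-x.1, ?_⟩, fun x => ⟨-x.1, ?_⟩, ?_, ?_⟩, ?_, ?_⟩
  · obtain ⟨x, hx1, hx2⟩ := x; exact ⟨by linarith, by linarith⟩
  · obtain ⟨x, hx1, hx2⟩ := x; exact ⟨by linarith, by linarith⟩
  · rintro ⟨x, hx⟩; apply Subtype.ext; simp
  · rintro ⟨x, hx⟩; apply Subtype.ext; simp
  · exact Continuous.subtype_mk (continuous_subtype_val.neg) _
  · exact Continuous.subtype_mk (continuous_subtype_val.neg) _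

open Real in
/-- The closed quadrant is homeomorphic to the closed half plane, via complex squaring. -/
def quadrantHomeo : (↥(Ici (0:ℝ)) × ↥(Ici (0:ℝ))) ≃ₜ (↥(Ici (0:ℝ)) × ℝ) := by
  refine ⟨⟨fun p => (⟨2 * p.1.1 * p.2.1, ?_⟩, p.1.1 ^ 2 - p.2.1 ^ 2),
    fun q => (⟨√((√(q.1.1 ^ 2 + q.2 ^ 2) + q.2) / 2), ?_⟩,
              ⟨√((√(q.1.1 ^ 2 + q.2 ^ 2) - q.2) / 2), ?_⟩), ?_, ?_⟩, ?_, ?_⟩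
  · have h1 : (0:ℝ) ≤ p.1.1 := p.1.2
    have h2 : (0:ℝ) ≤ p.2.1 := p.2.2
    exact mul_nonneg (mul_nonneg (by norm_num) h1) h2
  · exact sqrt_nonneg _
  · exact sqrt_nonneg _
  · rintro ⟨⟨x, hx⟩, ⟨y, hy⟩⟩
    have hx : (0:ℝ) ≤ x := hx
    have hy : (0:ℝ) ≤ y := hy
    have hr : √((2 * x * y) ^ 2 + (x ^ 2 - y ^ 2) ^ 2) = x ^ 2 + y ^ 2 := by
      rw [show (2 * x * y) ^ 2 + (x ^ 2 - y ^ 2) ^ 2 = (x ^ 2 + y ^ 2) ^ 2 by ring]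
      exact sqrt_sq (by positivity)
    ext
    · show √((√((2 * x * y) ^ 2 + (x ^ 2 - y ^ 2) ^ 2) + (x ^ 2 - y ^ 2)) / 2) = x
      rw [hr, show (x ^ 2 + y ^ 2 + (x ^ 2 - y ^ 2)) / 2 = x ^ 2 by ring, sqrt_sq hx]
    · show √((√((2 * x * y) ^ 2 + (x ^ 2 - y ^ 2) ^ 2) - (x ^ 2 - y ^ 2)) / 2) = y
      rw [hr, show (x ^ 2 + y ^ 2 - (x ^ 2 - y ^ 2)) / 2 = y ^ 2 by ring, sqrt_sq hy]
  · rintro ⟨⟨u, hu⟩, v⟩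
    have hu : (0:ℝ) ≤ u := hu
    set r := √(u ^ 2 + v ^ 2) with hrdef
    have hrv : |v| ≤ r := by
      rw [hrdef, ← sqrt_sq_eq_abs]
      exact sqrt_le_sqrt (by nlinarith [sq_nonneg u])
    have h1 : 0 ≤ r + v := by cases abs_le.mp hrv; linarith
    have h2 : 0 ≤ r - v := by cases abs_le.mp hrv; linarith
    have hr2 : r ^ 2 = u ^ 2 + v ^ 2 := sq_sqrt (by positivity)
    ext
    · show 2 * √((r + v) / 2) * √((r - v) / 2) = u
      rw [mul_assoc, ← sqrt_mul (by linarith : (0:ℝ) ≤ (r + v) / 2)]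
      rw [show (r + v) / 2 * ((r - v) / 2) = (r ^ 2 - v ^ 2) / 4 by ring, hr2,
        show (u ^ 2 + v ^ 2 - v ^ 2) / 4 = u ^ 2 / 4 by ring]
      rw [show u ^ 2 / 4 = (u / 2) ^ 2 by ring, sqrt_sq (by linarith)]
      ring
    · show √((r + v) / 2) ^ 2 - √((r - v) / 2) ^ 2 = v
      rw [sq_sqrt (by linarith), sq_sqrt (by linarith)]
      ring
  · apply Continuous.prodMk
    · apply Continuous.subtype_mk
      exact (continuous_const.mul (continuous_subtype_val.comp continuous_fst)).mul
        (continuous_subtype_val.comp continuous_snd)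
    · exact ((continuous_subtype_val.comp continuous_fst).pow 2).sub
        ((continuous_subtype_val.comp continuous_snd).pow 2)
  · have hrc : Continuous fun q : ↥(Ici (0:ℝ)) × ℝ => √(q.1.1 ^ 2 + q.2 ^ 2) :=
      continuous_sqrt.comp (((continuous_subtype_val.comp continuous_fst).pow 2).add
        (continuous_snd.pow 2))
    apply Continuous.prodMk
    · exact Continuous.subtype_mk (continuous_sqrt.comp ((hrc.add continuous_snd).div_const 2)) _
    · exact Continuous.subtype_mk (continuous_sqrt.comp ((hrc.sub continuous_snd).div_const 2)) _

abbrev Hs (n : ℕ) : Type := {x : ℝ × EuclideanSpace ℝ (Fin n) // 0 ≤ x.1}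

/-- splitting off the half-line coordinate -/
def hsHomeo (n : ℕ) : Hs n ≃ₜ ↥(Ici (0:ℝ)) × EuclideanSpace ℝ (Fin n) where
  toFun x := (⟨x.1.1, x.2⟩, x.1.2)
  invFun y := ⟨(y.1.1, y.2), y.1.2⟩
  left_inv x := rfl
  right_inv y := rfl
  continuous_toFun := by
    apply Continuous.prodMk
    · exact Continuous.subtype_mk (continuous_fst.comp continuous_subtype_val) _
    · exact continuous_snd.comp continuous_subtype_val
  continuous_invFun := by
    apply Continuous.subtype_mk
    exact Continuous.prodMk (continuous_subtype_val.comp continuous_fst) continuous_snd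

def eucSucc (n : ℕ) : (EuclideanSpace ℝ (Fin n) × ℝ) ≃ₜ EuclideanSpace ℝ (Fin (n + 1)) :=
  ((PiLp.continuousLinearEquiv 2 ℝ (fun _ : Fin n => ℝ)).toHomeomorph.prodCongr
      (Homeomorph.funUnique (Fin 1) ℝ).symm).trans <|
    (Fin.appendHomeomorph n 1).trans
      (PiLp.continuousLinearEquiv 2 ℝ (fun _ : Fin (n + 1) => ℝ)).toHomeomorph.symm

def hsReal (n : ℕ) : (Hs n × ℝ) ≃ₜ Hs (n + 1) :=
  ((hsHomeo n).prodCongr (Homeomorph.refl ℝ)).trans <|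
    (Homeomorph.prodAssoc _ _ _).trans <|
      ((Homeomorph.refl _).prodCongr (eucSucc n)).trans (hsHomeo (n + 1)).symm

def hsIci (n : ℕ) : (Hs n × ↥(Ici (0:ℝ))) ≃ₜ Hs (n + 1) :=
  ((hsHomeo n).prodCongr (Homeomorph.refl _)).trans <|
    (Homeomorph.prodAssoc _ _ _).trans <|
      ((Homeomorph.refl _).prodCongr (Homeomorph.prodComm _ _)).trans <|
        (Homeomorph.prodAssoc _ _ _).symm.trans <|
          (quadrantHomeo.prodCongr (Homeomorph.refl _)).trans <|
            (Homeomorph.prodAssoc _ _ _).trans <|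
              ((Homeomorph.refl _).prodCongr (Homeomorph.prodComm _ _)).trans <|
                ((Homeomorph.refl _).prodCongr (eucSucc n)).trans (hsHomeo (n + 1)).symm

/-- chart property: every point has an open neighborhood homeomorphic to an open
subset of the halfspace `[0,∞) × ℝ^n`. -/
def ChartProp {X : Type*} [TopologicalSpace X] (n : ℕ) (S : Set X) : Prop :=
  ∀ p : S, ∃ U : Set S, IsOpen U ∧ p ∈ U ∧ ∃ V : Set (Hs n), IsOpen V ∧ Nonempty (U ≃ₜ V)

lemma chartProp_congr {X Y : Type*} [TopologicalSpace X] [TopologicalSpace Y]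
    {S : Set X} {S' : Set Y} {n : ℕ} (e : ↥S ≃ₜ ↥S') (h : ChartProp n S) :
    ChartProp n S' := by
  intro p
  obtain ⟨U, hUo, hpU, V, hVo, ⟨eUV⟩⟩ := h (e.symm p)
  refine ⟨e.symm ⁻¹' U, e.symm.continuous.isOpen_preimage _ hUo, hpU, V, hVo, ?_⟩
  have h1 : e.symm ⁻¹' U = e '' U := by
    ext x
    constructor
    · intro hx; exact ⟨e.symm x, hx, e.apply_symm_apply x⟩
    · rintro ⟨u, hu, rfl⟩
      show e.symm (e u) ∈ U
      rwa [e.symm_apply_apply]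
  exact ⟨(Homeomorph.setCongr h1).trans ((e.image U).symm.trans eUV)⟩

lemma chartProp_step {X Y : Type*} [TopologicalSpace X] [TopologicalSpace Y]
    {S : Set X} {T : Set Y} {n : ℕ} (hS : ChartProp n S)
    (hT : ∀ q : T, ∃ O : Set Y, IsOpen O ∧ q.1 ∈ O ∧
      (Nonempty (↥(T ∩ O) ≃ₜ ℝ) ∨ Nonempty (↥(T ∩ O) ≃ₜ ↥(Ici (0:ℝ))))) :
    ChartProp (n + 1) (S ×ˢ T) := by
  intro p
  have hp1 : p.1.1 ∈ S := p.2.1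
  have hp2 : p.1.2 ∈ T := p.2.2
  obtain ⟨U, hUo, hpU, V, hVo, ⟨eUV⟩⟩ := hS ⟨p.1.1, hp1⟩
  obtain ⟨O, hOo, hqO, hML⟩ := hT ⟨p.1.2, hp2⟩
  set J : Set Y := T ∩ O with hJ
  have hf₁ : Continuous fun w : ↥(S ×ˢ T) => (⟨w.1.1, w.2.1⟩ : ↥S) :=
    Continuous.subtype_mk (continuous_fst.comp continuous_subtype_val) _
  set U' : Set ↥(S ×ˢ T) :=
    {w | (⟨w.1.1, w.2.1⟩ : ↥S) ∈ U ∧ w.1.2 ∈ O} with hU'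
  have hU'o : IsOpen U' := by
    have : U' = (fun w : ↥(S ×ˢ T) => (⟨w.1.1, w.2.1⟩ : ↥S)) ⁻¹' U ∩
        (fun w : ↥(S ×ˢ T) => w.1.2) ⁻¹' O := rfl
    rw [this]
    exact (hUo.preimage hf₁).inter
      (hOo.preimage (continuous_snd.comp continuous_subtype_val))
  have hpU' : p ∈ U' := ⟨hpU, hqO⟩
  -- homeomorphism U' ≃ₜ U × J
  have eUJ : ↥U' ≃ₜ ↥U × ↥J := by
    refine ⟨⟨fun w => (⟨⟨w.1.1.1, w.1.2.1⟩, w.2.1⟩, ⟨w.1.1.2, ⟨w.1.2.2, w.2.2⟩⟩),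
      fun uj => ⟨⟨(uj.1.1.1, uj.2.1), ⟨uj.1.1.2, uj.2.2.1⟩⟩, ⟨uj.1.2, uj.2.2.2⟩⟩,
      fun w => rfl, fun uj => rfl⟩, ?_, ?_⟩
    · apply Continuous.prodMk
      · exact Continuous.subtype_mk (hf₁.comp continuous_subtype_val) _
      · exact Continuous.subtype_mk
          (continuous_snd.comp (continuous_subtype_val.comp continuous_subtype_val)) _
    · apply Continuous.subtype_mk
      apply Continuous.subtype_mk
      apply Continuous.prodMk
      · exact continuous_subtype_val.comp (continuous_subtype_val.comp continuous_fst)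
      · exact continuous_subtype_val.comp continuous_snd
  -- generic gluing
  have main : ∀ (Mdl : Type) (_ : TopologicalSpace Mdl), Nonempty (↥J ≃ₜ Mdl) →
      ((Hs n × Mdl) ≃ₜ Hs (n + 1)) →
      ∃ V' : Set (Hs (n + 1)), IsOpen V' ∧ Nonempty (↥U' ≃ₜ ↥V') := by
    intro Mdl _ heJ Φ
    obtain ⟨eJ⟩ := heJ
    refine ⟨Φ '' (V ×ˢ (univ : Set Mdl)), Φ.isOpenMap _ (hVo.prod isOpen_univ), ?_⟩
    have e3 : ↥U' ≃ₜ ↥V × Mdl := eUJ.trans (eUV.prodCongr eJ)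
    have e4 : (↥V × Mdl) ≃ₜ ↥(V ×ˢ (univ : Set Mdl)) :=
      (((Homeomorph.refl _).prodCongr (Homeomorph.Set.univ Mdl).symm).trans
        (Homeomorph.Set.prod V univ).symm)
    exact ⟨e3.trans (e4.trans (Φ.image _))⟩
  rcases hML with heJ | heJ
  · obtain ⟨V', hV'o, hne⟩ := main ℝ inferInstance heJ (hsReal n)
    exact ⟨U', hU'o, hpU', V', hV'o, hne⟩
  · obtain ⟨V', hV'o, hne⟩ := main ↥(Ici (0:ℝ)) inferInstance heJ (hsIci n)
    exact ⟨U', hU'o, hpU', V', hV'o, hne⟩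

lemma icc_prop {K : ℝ} (hK : 0 < K) (q : ↥(Icc (-K) K)) :
    ∃ O : Set ℝ, IsOpen O ∧ q.1 ∈ O ∧
      (Nonempty (↥(Icc (-K) K ∩ O) ≃ₜ ℝ) ∨ Nonempty (↥(Icc (-K) K ∩ O) ≃ₜ ↥(Ici (0:ℝ)))) := by
  obtain ⟨q, hq1, hq2⟩ := q
  by_cases hqK : q = K
  · refine ⟨Ioi (-K), isOpen_Ioi, by simp [hqK]; linarith, Or.inr ?_⟩
    have he : Icc (-K) K ∩ Ioi (-K) = Ioc (-K) K := by
      ext x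
      simp only [mem_inter_iff, mem_Icc, mem_Ioi, mem_Ioc]
      constructor
      · rintro ⟨⟨h1, h2⟩, h3⟩; exact ⟨h3, h2⟩
      · rintro ⟨h1, h2⟩; exact ⟨⟨le_of_lt h1, h2⟩, h1⟩
    exact ⟨(Homeomorph.setCongr he).trans (iocHomeoIci hK)⟩
  by_cases hqmK : q = -K
  · refine ⟨Iio K, isOpen_Iio, by simp [hqmK]; linarith, Or.inr ?_⟩
    have he : Icc (-K) K ∩ Iio K = Ico (-K) K := by
      ext x
      simp only [mem_inter_iff, mem_Icc, mem_Iio, mem_Ico]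
      constructor
      · rintro ⟨⟨h1, h2⟩, h3⟩; exact ⟨h1, h3⟩
      · rintro ⟨h1, h2⟩; exact ⟨⟨h1, le_of_lt h2⟩, h2⟩
    exact ⟨(Homeomorph.setCongr he).trans (icoHomeoIci hK)⟩
  · refine ⟨Ioo (-K) K, isOpen_Ioo,
      ⟨lt_of_le_of_ne hq1 (fun h => hqmK h.symm), lt_of_le_of_ne hq2 hqK⟩, Or.inl ?_⟩
    have he : Icc (-K) K ∩ Ioo (-K) K = Ioo (-K) K :=
      inter_eq_self_of_subset_right Ioo_subset_Icc_self
    exact ⟨(Homeomorph.setCongr he).trans (iooHomeoReal hK)⟩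

/-- base case homeomorphism -/
def pwcZeroHomeo {a : ℕ} (M : Set (EuclideanSpace ℝ (Fin a))) (K : ℝ) :
    ↥M ≃ₜ ↥(prodWithCube (b := 0) M K) where
  toFun m := ⟨(WithLp.equiv 2 _).symm (m.1, (0 : EuclideanSpace ℝ (Fin 0))),
    ⟨m.2, fun i => i.elim0⟩⟩
  invFun z := ⟨((WithLp.equiv 2 _ z.1).1 : EuclideanSpace ℝ (Fin a)), z.2.1⟩
  left_inv m := rfl
  right_inv z := by
    apply Subtype.ext
    show ((WithLp.equiv 2 _).symm ((WithLp.equiv 2 _ z.1).1, 0)) = z.1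
    have : ((WithLp.equiv 2 _ z.1).1, (0 : EuclideanSpace ℝ (Fin 0))) = WithLp.equiv 2 _ z.1 :=
      Prod.ext rfl (Subsingleton.elim _ _)
    rw [this]
    exact (WithLp.equiv 2 _).symm_apply_apply z.1
  continuous_toFun := by
    apply Continuous.subtype_mk
    exact ((WithLp.prodContinuousLinearEquiv 2 ℝ
      (EuclideanSpace ℝ (Fin a)) (EuclideanSpace ℝ (Fin 0))).symm.continuous).comp
      (continuous_subtype_val.prodMk continuous_const)
  continuous_invFun := by
    apply Continuous.subtype_mk
    exact (continuous_fst.comp ((WithLp.prodContinuousLinearEquiv 2 ℝ _ _).continuous)).comp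
      continuous_subtype_val

lemma continuous_snoc {k : ℕ} :
    Continuous (fun p : (Fin k → ℝ) × ℝ => (Fin.snoc p.1 p.2 : Fin (k+1) → ℝ)) := by
  apply continuous_pi
  intro i
  induction i using Fin.lastCases with
  | last =>
    have h : (fun p : (Fin k → ℝ) × ℝ => (Fin.snoc p.1 p.2 : Fin (k+1) → ℝ) (Fin.last k))
        = fun p : (Fin k → ℝ) × ℝ => p.2 := by
      funext p; exact Fin.snoc_last _ _
    rw [h]; exact continuous_snd
  | cast i =>
    have h : (fun p : (Fin k → ℝ) × ℝ => (Fin.snoc p.1 p.2 : Fin (k+1) → ℝ) i.castSucc)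
        = fun p : (Fin k → ℝ) × ℝ => p.1 i := by
      funext p; exact Fin.snoc_castSucc _ _ i
    rw [h]; exact (continuous_apply i).comp continuous_fst

/-- the inductive step homeomorphism -/
def pwcSuccHomeo {a k : ℕ} (M : Set (EuclideanSpace ℝ (Fin a))) (K : ℝ) :
    ↥(prodWithCube (b := k + 1) M K) ≃ₜ ↥((prodWithCube (b := k) M K) ×ˢ Icc (-K) K) where
  toFun z := ⟨((WithLp.equiv 2 _).symm ((WithLp.equiv 2 _ z.1).1,
      WithLp.toLp 2 (fun i : Fin k => (WithLp.equiv 2 _ z.1).2 i.castSucc)),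
      (WithLp.equiv 2 _ z.1).2 (Fin.last k)),
    ⟨⟨z.2.1, fun i => z.2.2 i.castSucc⟩, abs_le.mp (z.2.2 (Fin.last k))⟩⟩
  invFun w := ⟨(WithLp.equiv 2 _).symm ((WithLp.equiv 2 _ w.1.1).1,
      WithLp.toLp 2 (Fin.snoc ((WithLp.equiv 2 _ w.1.1).2 : Fin k → ℝ) w.1.2 : Fin (k+1) → ℝ)),
    ⟨w.2.1.1, by
      intro i
      induction i using Fin.lastCases with
      | last => simpa [Fin.snoc_last] using abs_le.mpr w.2.2
      | cast i => simpa [Fin.snoc_castSucc] using w.2.1.2 i⟩⟩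
  left_inv z := by
    apply Subtype.ext
    show (WithLp.equiv 2 _).symm (_, _) = z.1
    have h2 : (Fin.snoc (fun i : Fin k => (WithLp.equiv 2 _ z.1).2 i.castSucc)
        ((WithLp.equiv 2 _ z.1).2 (Fin.last k)) : Fin (k+1) → ℝ)
        = ((WithLp.equiv 2 _ z.1).2 : Fin (k+1) → ℝ) := Fin.snoc_init_self _
    exact congrArg (fun y => (WithLp.equiv 2 _).symm ((WithLp.equiv 2 _ z.1).1, WithLp.toLp 2 y)) h2
  right_inv w := by
    apply Subtype.ext
    refine Prod.ext ?_ ?_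
    · show WithLp.toLp 2 (((WithLp.equiv 2 _ w.1.1).1 : EuclideanSpace ℝ (Fin a)),
        WithLp.toLp 2 ((fun i : Fin k => (Fin.snoc ((WithLp.equiv 2 _ w.1.1).2 : Fin k → ℝ) w.1.2
          : Fin (k+1) → ℝ) i.castSucc) : Fin k → ℝ)) = w.1.1
      refine congrArg (WithLp.toLp 2) (Prod.ext rfl ?_)
      refine congrArg (WithLp.toLp 2) ?_
      funext i
      show (Fin.snoc ((WithLp.equiv 2 _ w.1.1).2 : Fin k → ℝ) w.1.2
        : Fin (k+1) → ℝ) i.castSucc = ((WithLp.equiv 2 _ w.1.1).2 : Fin k → ℝ) i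
      exact Fin.snoc_castSucc _ _ i
    · show (Fin.snoc ((WithLp.equiv 2 _ w.1.1).2 : Fin k → ℝ) w.1.2
        : Fin (k+1) → ℝ) (Fin.last k) = w.1.2
      exact Fin.snoc_last _ _
  continuous_toFun := by
    apply Continuous.subtype_mk
    have hbase : Continuous fun z : ↥(prodWithCube (b := k + 1) M K) =>
        (WithLp.prodContinuousLinearEquiv 2 ℝ (EuclideanSpace ℝ (Fin a))
          (EuclideanSpace ℝ (Fin (k+1)))) z.1 :=
      ((WithLp.prodContinuousLinearEquiv 2 ℝ _ _).continuous).comp continuous_subtype_val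
    have hx : Continuous fun z : ↥(prodWithCube (b := k + 1) M K) =>
        (WithLp.equiv 2 _ z.1).1 := continuous_fst.comp hbase
    have hyi : ∀ i : Fin (k+1), Continuous fun z : ↥(prodWithCube (b := k + 1) M K) =>
        (WithLp.equiv 2 _ z.1).2 i := fun i =>
      (EuclideanSpace.proj (𝕜 := ℝ) i).continuous.comp (continuous_snd.comp hbase)
    apply Continuous.prodMk
    · apply ((WithLp.prodContinuousLinearEquiv 2 ℝ (EuclideanSpace ℝ (Fin a))
        (EuclideanSpace ℝ (Fin k))).symm.continuous).comp
      apply Continuous.prodMk hx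
      exact ((PiLp.continuousLinearEquiv 2 ℝ (fun _ : Fin k => ℝ)).symm.continuous).comp
        (continuous_pi fun i => hyi i.castSucc)
    · exact hyi (Fin.last k)
  continuous_invFun := by
    apply Continuous.subtype_mk
    have hbase : Continuous fun w : ↥((prodWithCube (b := k) M K) ×ˢ Icc (-K) K) =>
        (WithLp.prodContinuousLinearEquiv 2 ℝ (EuclideanSpace ℝ (Fin a))
          (EuclideanSpace ℝ (Fin k))) w.1.1 :=
      ((WithLp.prodContinuousLinearEquiv 2 ℝ _ _).continuous).comp
        (continuous_fst.comp continuous_subtype_val)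
    have hx : Continuous fun w : ↥((prodWithCube (b := k) M K) ×ˢ Icc (-K) K) =>
        (WithLp.equiv 2 _ w.1.1).1 := continuous_fst.comp hbase
    have hy : Continuous fun w : ↥((prodWithCube (b := k) M K) ×ˢ Icc (-K) K) =>
        ((WithLp.equiv 2 _ w.1.1).2 : Fin k → ℝ) :=
        (PiLp.continuousLinearEquiv 2 ℝ (fun _ : Fin k => ℝ)).continuous.comp (continuous_snd.comp hbase)
    have ht : Continuous fun w : ↥((prodWithCube (b := k) M K) ×ˢ Icc (-K) K) =>
        w.1.2 := continuous_snd.comp continuous_subtype_val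
    apply ((WithLp.prodContinuousLinearEquiv 2 ℝ (EuclideanSpace ℝ (Fin a))
      (EuclideanSpace ℝ (Fin (k+1)))).symm.continuous).comp
    apply Continuous.prodMk hx
    apply ((PiLp.continuousLinearEquiv 2 ℝ (fun _ : Fin (k+1) => ℝ)).symm.continuous).comp
    exact continuous_snoc.comp (hy.prodMk ht)


lemma prodWithCube_chartProp {a : ℕ} {K : ℝ} (hK : 0 < K) {n : ℕ}
    {M : Set (EuclideanSpace ℝ (Fin a))} (hM : ChartProp n M) :
    ∀ k : ℕ, ChartProp (n + k) (prodWithCube (b := k) M K)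
  | 0 => chartProp_congr (pwcZeroHomeo M K) hM
  | (k+1) => by
      have ih := prodWithCube_chartProp hK hM k
      have h1 := chartProp_step ih (icc_prop hK)
      exact chartProp_congr (pwcSuccHomeo M K).symm h1

lemma prodWithCube_isCompact {a b : ℕ} {K : ℝ} {M : Set (EuclideanSpace ℝ (Fin a))}
    (hM : IsCompact M) : IsCompact (prodWithCube (b := b) M K) := by
  have he : prodWithCube (b := b) M K =
      (WithLp.prodContinuousLinearEquiv 2 ℝ (EuclideanSpace ℝ (Fin a))
        (EuclideanSpace ℝ (Fin b))).toHomeomorph ⁻¹' (M ×ˢ cube b K) := rfl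
  rw [he]
  exact (Homeomorph.isCompact_preimage _).mpr (hM.prod cube_isCompact)

/-- Taking a Cartesian product with a cube preserves manifold structure, global
reach and local reach (Lemma 4.2): if `M ⊆ [-K_I,K_I]^{m-k}` is a compact
`d`-manifold with boundary with reach `≥ τ_g` and local reach `≥ τ_ℓ`, then
`M × [-K_I,K_I]^k ⊆ [-K_I,K_I]^m` is a compact `(d+k)`-manifold with boundary
with reach `≥ τ_g` and local reach `≥ τ_ℓ`. -/
theorem product_with_cube_preserves_regularity
    (m d k : ℕ) (KI τg τℓ : ℝ)
    (hd : 1 ≤ d) (hk : 1 ≤ k) (hdk : d + k ≤ m)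
    (hKI : 1 ≤ KI) (hτg : 0 < τg) (hτgℓ : τg ≤ τℓ)
    (M : Set (EuclideanSpace ℝ (Fin (m - k))))
    (hMan : IsCompactTopManifoldWithBoundary d M)
    (hsub : M ⊆ cube (m - k) KI)
    (hreach : HasReachGE M τg) (hlocal : HasLocalReachGE M τℓ) :
    IsCompactTopManifoldWithBoundary (d + k) (prodWithCube (b := k) M KI) ∧
    prodWithCube (b := k) M KI ⊆ prodWithCube (b := k) (cube (m - k) KI) KI ∧
    HasReachGE (prodWithCube (b := k) M KI) τg ∧
    HasLocalReachGE (prodWithCube (b := k) M KI) τℓ := by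
  have hK0 : (0:ℝ) < KI := lt_of_lt_of_le one_pos hKI
  have hMne : M.Nonempty := by
    by_contra h
    rw [not_nonempty_iff_eq_empty] at h
    obtain ⟨y, ⟨hyM, -⟩, -⟩ := hreach 0 (by rw [h, Metric.infDist_empty]; exact hτg)
    rw [h] at hyM
    exact (Set.notMem_empty y) hyM
  refine ⟨⟨prodWithCube_isCompact hMan.1, ?_⟩, ?_, ?_, ?_⟩
  · -- charts
    have hchart : ChartProp (d - 1) M := hMan.2
    have h2 := prodWithCube_chartProp hK0 hchart k
    have he : d - 1 + k = d + k - 1 := by omega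
    rw [he] at h2
    exact h2
  · -- inclusion
    intro z hz
    exact ⟨hsub hz.1, hz.2⟩
  · -- global reach
    exact prod_reach hK0.le hMne hreach
  · -- local reach
    intro z hz
    have hz1 : (WithLp.equiv 2 _ z).1 ∈ M := hz.1
    obtain ⟨U, hUM, hUnhd, hUreach⟩ := hlocal _ hz1
    have hUne : U.Nonempty := ⟨_, mem_of_mem_nhdsWithin hz1 hUnhd⟩
    refine ⟨prodWithCube (b := k) U KI, fun w hw => ⟨hUM hw.1, hw.2⟩, ?_,
      prod_reach hK0.le hUne hUreach⟩
    obtain ⟨O, hOo, hzO, hOsub⟩ := mem_nhdsWithin.mp hUnhd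
    refine mem_nhdsWithin.mpr
      ⟨(fun w : WithLp 2 (EuclideanSpace ℝ (Fin (m - k)) × EuclideanSpace ℝ (Fin k)) =>
          (WithLp.equiv 2 _ w).1) ⁻¹' O, ?_, hzO, ?_⟩
    · exact hOo.preimage (continuous_fst.comp
        (WithLp.prodContinuousLinearEquiv 2 ℝ _ _).continuous)
    · rintro w ⟨hwO, hwM, hwC⟩
      exact ⟨hOsub ⟨hwO, hwM⟩, hwC⟩

end
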